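/- For all distinct a, b ∈ {1,…,n}, the minimum decomposition cost of the transposition swapping a and b is at most twice the minimum path cost between a and b: M_φ(swap(a,b)) ≤ 2·cost(p*(a,b)). -/

import Mathlib

variable {n : ℕ}

/-- The minimum `φ`-cost over all transposition decompositions of `π`
(a transposition decomposition is a list of pairs `(aᵢ, bᵢ)` of distinct elements
whose associated swaps multiply to `π`; its cost is `Σ φ(aᵢ, bᵢ)`). -/
noncomputable def Mcost (φ : Fin n → Fin n → ℝ) (π : Equiv.Perm (Fin n)) : ℝ :=
  sInf {c : ℝ | ∃ l : List (Fin n × Fin n), (∀ p ∈ l, p.1 ≠ p.2) ∧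
    (l.map fun p => Equiv.swap p.1 p.2).prod = π ∧
    (l.map fun p => φ p.1 p.2).sum = c}

/-- `p` is a path from `a` to `b`: a list of pairwise distinct elements starting
at `a` and ending at `b`. -/
def IsPathList (p : List (Fin n)) (a b : Fin n) : Prop :=
  p.Nodup ∧ p.head? = some a ∧ p.getLast? = some b

/-- The cost of a path: the sum of `φ` over consecutive pairs. -/
noncomputable def pathCost (φ : Fin n → Fin n → ℝ) (p : List (Fin n)) : ℝ :=
  ((p.zip p.tail).map fun q => φ q.1 q.2).sum

lemma mem_of_getLast?' {α : Type*} {l : List α} {x : α}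
    (h : l.getLast? = some x) : x ∈ l := by
  obtain ⟨h', rfl⟩ := List.mem_getLast?_eq_getLast (show x ∈ l.getLast? from h ▸ rfl)
  exact List.getLast_mem h'

lemma key (φ : Fin n → Fin n → ℝ)
    (hnn : ∀ a b : Fin n, a ≠ b → 0 ≤ φ a b) :
    ∀ p : List (Fin n), ∀ a b : Fin n, p.Nodup → p.head? = some a →
      p.getLast? = some b → a ≠ b →
      ∃ l : List (Fin n × Fin n), (∀ q ∈ l, q.1 ≠ q.2) ∧
        (l.map fun q => Equiv.swap q.1 q.2).prod = Equiv.swap a b ∧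
        (l.map fun q => φ q.1 q.2).sum ≤ 2 * pathCost φ p := by
  intro p
  induction p with
  | nil => intro a b _ h; simp at h
  | cons x t ih =>
    intro a b hnd hhead hlast hab
    have hax : a = x := (by simpa using hhead : x = a).symm
    subst hax
    cases t with
    | nil =>
      exfalso
      have : a = b := by simpa [List.getLast?] using hlast
      exact hab this
    | cons y rest =>
      have hnd' : (y :: rest).Nodup := hnd.of_cons
      have hxmem : a ∉ (y :: rest) := by
        simpa using (List.nodup_cons.mp hnd).1
      have hlast' : (y :: rest).getLast? = some b := by
        rwa [List.getLast?_cons_cons] at hlast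
      have hay : a ≠ y := by
        intro h; exact hxmem (h ▸ (List.mem_cons_self : y ∈ y :: rest))
      cases rest with
      | nil =>
        have hby : b = y := (by simpa [List.getLast?] using hlast' : y = b).symm
        subst hby
        refine ⟨[(a, b)], by simpa using hab, by simp, ?_⟩
        have : pathCost φ [a, b] = φ a b := by simp [pathCost]
        rw [this]
        have := hnn a b hab
        simp
        linarith
      | cons z rest' =>
        have hyb : y ≠ b := by
          have h1 : (z :: rest').getLast? = some b := by
            rwa [List.getLast?_cons_cons] at hlast'
          have hbmem : b ∈ (z :: rest') := mem_of_getLast?' h1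
          intro h
          exact (List.nodup_cons.mp hnd').1 (h ▸ hbmem)
        obtain ⟨l, hl1, hl2, hl3⟩ := ih y b hnd' rfl hlast' hyb
        have hbmem' : b ∈ (y :: z :: rest') := mem_of_getLast?' hlast'
        have hba : b ≠ a := fun h => hxmem (h ▸ hbmem')
        refine ⟨(a, y) :: l ++ [(a, y)], ?_, ?_, ?_⟩
        · intro q hq
          rcases List.mem_cons.mp hq with h | h
          · subst h; exact hay
          rcases List.mem_append.mp h with h | h
          · exact hl1 q h
          · simp only [List.mem_singleton] at h; subst h; exact hay
        · have conj : Equiv.swap a y * Equiv.swap y b * Equiv.swap a y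
              = Equiv.swap a b := by
            have := Equiv.swap_mul_swap_mul_swap (x := b) (y := y) (z := a)
              (Ne.symm hyb) hba
            rw [Equiv.swap_comm y a, Equiv.swap_comm b y] at this
            rw [this, Equiv.swap_comm]
          simp only [List.map_cons, List.map_append, List.prod_cons,
            List.prod_append, List.map_cons, List.map_nil, List.prod_cons,
            List.prod_nil, mul_one, hl2, ← mul_assoc]
          exact conj
        · have hpc : pathCost φ (a :: y :: z :: rest')
              = φ a y + pathCost φ (y :: z :: rest') := by
            simp [pathCost]
          rw [hpc]
          simp only [List.map_cons, List.map_append, List.map_nil,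
            List.sum_cons, List.sum_append, List.sum_nil, add_zero]
          linarith


/-- for distinct `a, b`, the minimum decomposition cost of `swap a b`
is at most twice the minimum path cost between `a` and `b`. -/
theorem stmt6 (φ : Fin n → Fin n → ℝ)
    (hnn : ∀ a b : Fin n, a ≠ b → 0 ≤ φ a b)
    (hsym : ∀ a b : Fin n, φ a b = φ b a)
    (a b : Fin n) (hab : a ≠ b) :
    Mcost φ (Equiv.swap a b)
      ≤ 2 * sInf {c : ℝ | ∃ p : List (Fin n), IsPathList p a b ∧ pathCost φ p = c} := by
  set S := {c : ℝ | ∃ p : List (Fin n), IsPathList p a b ∧ pathCost φ p = c}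
  have hSne : S.Nonempty := ⟨φ a b, [a, b], ⟨by simp [hab], rfl, rfl⟩, by simp [pathCost]⟩
  have hbdd : BddBelow {c : ℝ | ∃ l : List (Fin n × Fin n), (∀ p ∈ l, p.1 ≠ p.2) ∧
      (l.map fun p => Equiv.swap p.1 p.2).prod = Equiv.swap a b ∧
      (l.map fun p => φ p.1 p.2).sum = c} := by
    refine ⟨0, fun c hc => ?_⟩
    obtain ⟨l, hl1, _, hl3⟩ := hc
    rw [← hl3]
    exact List.sum_nonneg (by
      intro x hx
      obtain ⟨q, hq, rfl⟩ := List.mem_map.mp hx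
      exact hnn q.1 q.2 (hl1 q hq))
  have hmain : ∀ c ∈ S, Mcost φ (Equiv.swap a b) ≤ 2 * c := by
    rintro c ⟨p, ⟨hnd, hh, hl⟩, rfl⟩
    obtain ⟨l, hl1, hl2, hl3⟩ := key φ hnn p a b hnd hh hl hab
    calc Mcost φ (Equiv.swap a b) ≤ (l.map fun q => φ q.1 q.2).sum :=
          csInf_le hbdd ⟨l, hl1, hl2, rfl⟩
      _ ≤ 2 * pathCost φ p := hl3
  have hlow : Mcost φ (Equiv.swap a b) / 2 ≤ sInf S := by
    apply le_csInf hSne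
    intro c hc
    linarith [hmain c hc]
  linarith
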